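/- Let n ≥ 2 and d > 0. Suppose f maps points x, p₁,...,pₙ, y ∈ ℝⁿ to ℂⁿ such that φₙ(f(x),f(pᵢ)) = φₙ(f(y),f(pᵢ)) = d² for all i, and φₙ(f(pᵢ),f(pⱼ)) = d² for all i < j. Then φₙ(f(x),f(y)) = (2+2/n)·d² or φₙ(f(x),f(y)) = 0. -/

import Mathlib

noncomputable def phi (n : ℕ) (x y : Fin n → ℂ) : ℂ := ∑ i, (x i - y i) ^ 2

noncomputable def Bf (n : ℕ) (x y : Fin n → ℂ) : ℂ := ∑ i, x i * y i

lemma Bf_comm (n : ℕ) (x y : Fin n → ℂ) : Bf n x y = Bf n y x := by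
  simp [Bf, mul_comm]

lemma phi_eq_Bf (n : ℕ) (x y : Fin n → ℂ) : phi n x y = Bf n (x - y) (x - y) := by
  simp [phi, Bf, sq]

lemma Bf_expand (n : ℕ) (a b : Fin n → ℂ) :
    Bf n (a - b) (a - b) = Bf n a a - 2 * Bf n a b + Bf n b b := by
  simp only [Bf, Pi.sub_apply]
  have h : ∀ i, (a i - b i) * (a i - b i)
      = a i * a i - 2 * (a i * b i) + b i * b i := by intro i; ring
  simp_rw [h]
  rw [Finset.sum_add_distrib, Finset.sum_sub_distrib, Finset.mul_sum]

lemma Bf_sum_left {m n : ℕ} (c : Fin m → ℂ) (f : Fin m → (Fin n → ℂ)) (y : Fin n → ℂ) :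
    Bf n (∑ i, c i • f i) y = ∑ i, c i * Bf n (f i) y := by
  simp only [Bf, Finset.sum_apply, Pi.smul_apply, smul_eq_mul, Finset.mul_sum,
    Finset.sum_mul]
  rw [Finset.sum_comm]
  congr 1; ext j; congr 1; ext i; ring

theorem stmt13 (n : ℕ) (hn : 2 ≤ n) (d : ℝ) (hd : 0 < d)
    (fx fy : Fin n → ℂ) (fp : Fin n → (Fin n → ℂ))
    (h1 : ∀ i, phi n fx (fp i) = (d : ℂ) ^ 2)
    (h2 : ∀ i, phi n fy (fp i) = (d : ℂ) ^ 2)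
    (h3 : ∀ i j : Fin n, i < j → phi n (fp i) (fp j) = (d : ℂ) ^ 2) :
    phi n fx fy = (2 + 2 / (n : ℂ)) * (d : ℂ) ^ 2 ∨ phi n fx fy = 0 := by
  set T : ℂ := phi n fx fy with hT
  by_cases hT0 : T = 0
  · right; exact hT0
  left
  have hd2 : (d : ℂ) ^ 2 ≠ 0 := by
    simp [pow_eq_zero_iff, Complex.ofReal_eq_zero, hd.ne']
  have hn0 : (n : ℂ) ≠ 0 := by
    exact_mod_cast Nat.cast_ne_zero.mpr (by omega)
  -- vectors
  set u : Fin n → (Fin n → ℂ) := fun i => fp i - fx with hu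
  set w : Fin n → ℂ := fy - fx with hw
  -- Gram values
  have hBuu : ∀ i, Bf n (u i) (u i) = (d : ℂ) ^ 2 := by
    intro i
    have h := h1 i
    rw [phi_eq_Bf] at h
    have h2' : fx - fp i = -(u i) := by simp [hu]
    rw [h2'] at h
    simpa [Bf, neg_mul_neg] using h
  have hBww : Bf n w w = T := by
    rw [hT, phi_eq_Bf]
    have hxy : fx - fy = -w := by simp [hw]
    rw [hxy]
    simp [Bf, neg_mul_neg]
  have hBwu : ∀ i, Bf n w (u i) = T / 2 := by
    intro i
    have h := h2 i
    rw [phi_eq_Bf] at h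
    have h2' : fy - fp i = w - u i := by simp [hw, hu]
    rw [h2', Bf_expand, hBww, hBuu] at h
    linear_combination -h / 2
  have hBuu' : ∀ i j, i ≠ j → Bf n (u i) (u j) = (d : ℂ) ^ 2 / 2 := by
    have key : ∀ i j : Fin n, i < j → Bf n (u i) (u j) = (d : ℂ) ^ 2 / 2 := by
      intro i j hij
      have h := h3 i j hij
      rw [phi_eq_Bf] at h
      have h2' : fp i - fp j = u i - u j := by simp [hu]
      rw [h2', Bf_expand, hBuu, hBuu] at h
      linear_combination -h / 2
    intro i j hij
    rcases lt_or_gt_of_ne hij with h | h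
    · exact key i j h
    · rw [Bf_comm]; exact key j i h
  -- linear dependence of n+1 vectors in ℂ^n
  set v : Fin (n + 1) → (Fin n → ℂ) := Fin.snoc u w with hv
  have hnli : ¬ LinearIndependent ℂ v := by
    intro h
    have hcard := h.fintype_card_le_finrank
    simp [Module.finrank_fintype_fun_eq_card] at hcard
  rw [Fintype.not_linearIndependent_iff] at hnli
  obtain ⟨g, hg, i0, hi0⟩ := hnli
  set S : ℂ := ∑ i : Fin n, g i.castSucc with hS
  set gl : ℂ := g (Fin.last n) with hgl
  -- apply Bf ∙ y to the dependence relation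
  have key : ∀ y : Fin n → ℂ,
      (∑ i : Fin n, g i.castSucc * Bf n (u i) y) + gl * Bf n w y = 0 := by
    intro y
    have h := congrArg (fun z => Bf n z y) hg
    rw [Bf_sum_left] at h
    rw [Fin.sum_univ_castSucc] at h
    simp only [hv, Fin.snoc_castSucc, Fin.snoc_last] at h
    have h0 : Bf n (0 : Fin n → ℂ) y = 0 := by simp [Bf]
    rw [h0] at h
    exact h
  -- equation from w
  have e1 : S * (T / 2) + gl * T = 0 := by
    have h := key w
    simp only [hBww] at h
    rw [← h]
    congr 1
    rw [Finset.sum_mul]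
    refine Finset.sum_congr rfl fun i _ => ?_
    rw [Bf_comm, hBwu]
  -- equations from u j
  have e2 : ∀ j : Fin n,
      g j.castSucc * ((d : ℂ) ^ 2 / 2) + S * ((d : ℂ) ^ 2 / 2) + gl * (T / 2) = 0 := by
    intro j
    have h := key (u j)
    have hval : ∀ i : Fin n, Bf n (u i) (u j)
        = (d : ℂ) ^ 2 / 2 + (if i = j then (d : ℂ) ^ 2 / 2 else 0) := by
      intro i
      by_cases hij : i = j
      · subst hij; rw [hBuu i, if_pos rfl]; ring
      · rw [hBuu' i j hij, if_neg hij, add_zero]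
    simp only [hval, hBwu j] at h
    have hsum : ∑ i : Fin n, g i.castSucc *
        ((d : ℂ) ^ 2 / 2 + (if i = j then (d : ℂ) ^ 2 / 2 else 0))
        = S * ((d : ℂ) ^ 2 / 2) + g j.castSucc * ((d : ℂ) ^ 2 / 2) := by
      rw [Finset.sum_congr rfl (fun i _ => by rw [mul_add])]
      rw [Finset.sum_add_distrib]
      congr 1
      · rw [hS, Finset.sum_mul]
      · rw [Finset.sum_congr rfl (fun i _ => by rw [mul_ite, mul_zero])]
        simp
    rw [hsum] at h
    linear_combination h
  -- derive:  g j.castSucc = -S - gl * T / d^2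
  have e3 : ∀ j : Fin n, g j.castSucc = -S - gl * T / (d : ℂ) ^ 2 := by
    intro j
    have h := e2 j
    have hd0 : (d : ℂ) ≠ 0 := by exact_mod_cast hd.ne'
    field_simp at h ⊢
    linear_combination h
  -- sum over j
  have e4 : S * ((n : ℂ) + 1) * (d : ℂ) ^ 2 = -(n : ℂ) * gl * T := by
    have hsum : S = ∑ j : Fin n, g j.castSucc := hS
    rw [Finset.sum_congr rfl (fun j _ => e3 j)] at hsum
    simp only [Finset.sum_const, Finset.card_univ, Fintype.card_fin, nsmul_eq_mul] at hsum
    have hd0 : (d : ℂ) ≠ 0 := by exact_mod_cast hd.ne'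
    field_simp at hsum
    linear_combination hsum
  -- from e1 and T ≠ 0 : S = -2 gl
  have e5 : S = -2 * gl := by
    have h : T * (S / 2 + gl) = 0 := by linear_combination e1
    rcases mul_eq_zero.mp h with h | h
    · exact absurd h hT0
    · linear_combination 2 * h
  -- gl ≠ 0
  have hgl0 : gl ≠ 0 := by
    intro h0
    apply hi0
    have hS0 : S = 0 := by rw [e5, h0]; ring
    have hz : ∀ j : Fin n, g j.castSucc = 0 := by
      intro j; rw [e3 j, hS0, h0]; ring
    refine Fin.lastCases ?_ ?_ i0
    · rw [← hgl]; exact h0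
    · exact hz
  -- finish
  have : gl * (2 * ((n : ℂ) + 1) * (d : ℂ) ^ 2 - (n : ℂ) * T) = 0 := by
    rw [e5] at e4
    field_simp at e4
    linear_combination (-gl) * e4
  rcases mul_eq_zero.mp this with h | h
  · exact absurd h hgl0
  · have hTval : (n : ℂ) * T = 2 * ((n : ℂ) + 1) * (d : ℂ) ^ 2 := by
      linear_combination -h
    have hfin : T = (2 * ((n : ℂ) + 1) * (d : ℂ) ^ 2) / (n : ℂ) := by
      rw [eq_div_iff hn0]; linear_combination hTval
    rw [hfin]
    field_simp
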